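/- Let (α, β) : P → P′ be a bounded morphism between Ω-polarities. Define im(α, β) = (α[X], β[Y], R″, S″, T″), where R″ = R′ ∩ (α[X] × β[Y]), S″ = S′ ∩ (α[X]ⁿ × β[Y]) and T″ = T′ ∩ (α[X] × β[Y]ᵐ). Then: (1) the quasi-orders ≤₁″ and ≤₂″ defined from R″ on α[X] and β[Y] are the restrictions of ≤₁′ and ≤₂′ respectively; (2) all sections of S″ and T″ are stable in the polarity (α[X], β[Y], R″), so im(α, β) is an Ω-polarity; (3) im(α, β) is an inner substructure of P′, i.e. the inclusion maps α[X] ↪ X′ and β[Y] ↪ Y′ form a bounded morphism from im(α, β) to P′. -/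
import Mathlib


/-- The right polar `ρ_R A = {y ∈ Y : ∀ x ∈ A, x R y}`. -/
def rpolar {X Y : Type*} (R : X → Y → Prop) (A : Set X) : Set Y := {y | ∀ x ∈ A, R x y}

/-- The left polar `λ_R B = {x ∈ X : ∀ y ∈ B, x R y}`. -/
def lpolar {X Y : Type*} (R : X → Y → Prop) (B : Set Y) : Set X := {x | ∀ y ∈ B, R x y}

/-- `A ⊆ X` is stable if `A = λ_R (ρ_R A)`. -/
def StableX {X Y : Type*} (R : X → Y → Prop) (A : Set X) : Prop := A = lpolar R (rpolar R A)

/-- `B ⊆ Y` is stable if `B = ρ_R (λ_R B)`. -/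
def StableY {X Y : Type*} (R : X → Y → Prop) (B : Set Y) : Prop := B = rpolar R (lpolar R B)

/-- The quasi-order `≤₁` on `X`. -/
def le1 {X Y : Type*} (R : X → Y → Prop) (x x' : X) : Prop := rpolar R {x} ⊆ rpolar R {x'}

/-- The quasi-order `≤₂` on `Y`. -/
def le2 {X Y : Type*} (R : X → Y → Prop) (y y' : Y) : Prop := lpolar R {y} ⊆ lpolar R {y'}

/-- The operator `f_S` induced on stable sets by `S ⊆ Xⁿ × Y`. -/
def fS {X Y : Type*} {n : ℕ} (R : X → Y → Prop) (S : (Fin n → X) → Y → Prop)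
    (A : Fin n → Set X) : Set X :=
  lpolar R {y | ∀ xs : Fin n → X, (∀ i, xs i ∈ A i) → S xs y}

/-- The dual operator `g_T` induced on stable sets by `T ⊆ X × Yᵐ`. -/
def gT {X Y : Type*} {m : ℕ} (R : X → Y → Prop) (T : X → (Fin m → Y) → Prop)
    (A : Fin m → Set X) : Set X :=
  {x | ∀ ys : Fin m → Y, (∀ i, ys i ∈ rpolar R (A i)) → T x ys}

/-- All sections of `S ⊆ Xⁿ × Y` are stable. -/
def SSectionsStable {X Y : Type*} {n : ℕ} (R : X → Y → Prop)
    (S : (Fin n → X) → Y → Prop) : Prop :=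
  (∀ xs : Fin n → X, StableY R {y | S xs y}) ∧
  (∀ (xs : Fin n → X) (i : Fin n) (y : Y), StableX R {x' | S (Function.update xs i x') y})

/-- All sections of `T ⊆ X × Yᵐ` are stable. -/
def TSectionsStable {X Y : Type*} {m : ℕ} (R : X → Y → Prop)
    (T : X → (Fin m → Y) → Prop) : Prop :=
  (∀ ys : Fin m → Y, StableX R {x | T x ys}) ∧
  (∀ (x : X) (ys : Fin m → Y) (i : Fin m), StableY R {y' | T x (Function.update ys i y')})
/-- A bounded morphism between plain polarities. -/
structure IsPolarityMorphism {X Y X' Y' : Type*} (R : X → Y → Prop) (R' : X' → Y' → Prop)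
    (α : X → X') (β : Y → Y') : Prop where
  mono1 : ∀ ⦃x z : X⦄, le1 R x z → le1 R' (α x) (α z)
  mono2 : ∀ ⦃y w : Y⦄, le2 R y w → le2 R' (β y) (β w)
  backR : ∀ ⦃x : X⦄ ⦃y : Y⦄, R' (α x) (β y) → R x y
  forthR1 : ∀ ⦃x' : X'⦄ ⦃y : Y⦄, (∀ x : X, le1 R' x' (α x) → R x y) → R' x' (β y)
  forthR2 : ∀ ⦃x : X⦄ ⦃y' : Y'⦄, (∀ y : Y, le2 R' y' (β y) → R x y) → R' (α x) y'

/-- A bounded morphism between Ω-polarities. -/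
structure IsBddMorphism {X Y X' Y' : Type*} {n m : ℕ}
    (R : X → Y → Prop) (S : (Fin n → X) → Y → Prop) (T : X → (Fin m → Y) → Prop)
    (R' : X' → Y' → Prop) (S' : (Fin n → X') → Y' → Prop) (T' : X' → (Fin m → Y') → Prop)
    (α : X → X') (β : Y → Y') : Prop where
  mono1 : ∀ ⦃x z : X⦄, le1 R x z → le1 R' (α x) (α z)
  mono2 : ∀ ⦃y w : Y⦄, le2 R y w → le2 R' (β y) (β w)
  backR : ∀ ⦃x : X⦄ ⦃y : Y⦄, R' (α x) (β y) → R x y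
  forthR1 : ∀ ⦃x' : X'⦄ ⦃y : Y⦄, (∀ x : X, le1 R' x' (α x) → R x y) → R' x' (β y)
  forthR2 : ∀ ⦃x : X⦄ ⦃y' : Y'⦄, (∀ y : Y, le2 R' y' (β y) → R x y) → R' (α x) y'
  backS : ∀ ⦃xs : Fin n → X⦄ ⦃y : Y⦄, S' (fun i => α (xs i)) (β y) → S xs y
  forthS : ∀ ⦃xs' : Fin n → X'⦄ ⦃y : Y⦄,
    (∀ xs : Fin n → X, (∀ i, le1 R' (xs' i) (α (xs i))) → S xs y) → S' xs' (β y)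
  backT : ∀ ⦃x : X⦄ ⦃ys : Fin m → Y⦄, T' (α x) (fun i => β (ys i)) → T x ys
  forthT : ∀ ⦃x : X⦄ ⦃ys' : Fin m → Y'⦄,
    (∀ ys : Fin m → Y, (∀ i, le2 R' (ys' i) (β (ys i))) → T x ys) → T' (α x) ys'
/-- The polarity relation of the image structure `im(α, β)`, on the images of `α` and `β`. -/
def imR {X Y X' Y' : Type*} (R' : X' → Y' → Prop) (α : X → X') (β : Y → Y') :
    ↥(Set.range α) → ↥(Set.range β) → Prop :=
  fun x y => R' x.val y.val

/-- The `S`-relation of the image structure `im(α, β)`. -/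
def imS {X Y X' Y' : Type*} {n : ℕ} (S' : (Fin n → X') → Y' → Prop)
    (α : X → X') (β : Y → Y') :
    (Fin n → ↥(Set.range α)) → ↥(Set.range β) → Prop :=
  fun xs y => S' (fun i => (xs i).val) y.val

/-- The `T`-relation of the image structure `im(α, β)`. -/
def imT {X Y X' Y' : Type*} {m : ℕ} (T' : X' → (Fin m → Y') → Prop)
    (α : X → X') (β : Y → Y') :
    ↥(Set.range α) → (Fin m → ↥(Set.range β)) → Prop :=
  fun x ys => T' x.val (fun i => (ys i).val)


section Aux

variable {X Y X' Y' : Type*} {n m : ℕ}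

lemma le1_iff (R : X → Y → Prop) (x z : X) : le1 R x z ↔ ∀ y, R x y → R z y := by
  simp [le1, rpolar, Set.subset_def]

lemma le2_iff (R : X → Y → Prop) (y w : Y) : le2 R y w ↔ ∀ x, R x y → R x w := by
  simp [le2, lpolar, Set.subset_def]

lemma lpolar_up {R : X → Y → Prop} {B : Set Y} {x z : X} (hx : x ∈ lpolar R B)
    (hxz : le1 R x z) : z ∈ lpolar R B :=
  fun y hy => (le1_iff R x z).1 hxz y (hx y hy)

lemma rpolar_up {R : X → Y → Prop} {A : Set X} {y w : Y} (hy : y ∈ rpolar R A)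
    (hyw : le2 R y w) : w ∈ rpolar R A :=
  fun x hx => (le2_iff R y w).1 hyw x (hy x hx)

lemma stableX_up {R : X → Y → Prop} {A : Set X} (hA : StableX R A) {x z : X}
    (hx : x ∈ A) (hxz : le1 R x z) : z ∈ A := by
  rw [hA] at hx ⊢; exact lpolar_up hx hxz

lemma stableY_up {R : X → Y → Prop} {B : Set Y} (hB : StableY R B) {y w : Y}
    (hy : y ∈ B) (hyw : le2 R y w) : w ∈ B := by
  rw [hB] at hy ⊢; exact rpolar_up hy hyw

lemma subset_rpolar_lpolar (R : X → Y → Prop) (B : Set Y) : B ⊆ rpolar R (lpolar R B) :=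
  fun y hy x hx => hx y hy

lemma subset_lpolar_rpolar (R : X → Y → Prop) (A : Set X) : A ⊆ lpolar R (rpolar R A) :=
  fun x hx y hy => hy x hx

variable {R : X → Y → Prop} {S : (Fin n → X) → Y → Prop} {T : X → (Fin m → Y) → Prop}
  {R' : X' → Y' → Prop} {S' : (Fin n → X') → Y' → Prop} {T' : X' → (Fin m → Y') → Prop}
  {α : X → X'} {β : Y → Y'}

lemma keyA (h : IsBddMorphism R S T R' S' T' α β) (x : X) (y' : Y') :
    R' (α x) y' ↔ ∀ y : Y, le2 R' y' (β y) → R' (α x) (β y) := by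
  constructor
  · intro hR y hle; exact (le2_iff R' y' (β y)).1 hle _ hR
  · intro H; exact h.forthR2 (fun y hle => h.backR (H y hle))

lemma keyB (h : IsBddMorphism R S T R' S' T' α β) (x' : X') (y : Y) :
    R' x' (β y) ↔ ∀ x : X, le1 R' x' (α x) → R' (α x) (β y) := by
  constructor
  · intro hR x hle; exact (le1_iff R' x' (α x)).1 hle _ hR
  · intro H; exact h.forthR1 (fun x hle => h.backR (H x hle))

lemma Supdate (hS' : SSectionsStable R' S') {a b : Fin n → X'}
    (hab : ∀ i, le1 R' (a i) (b i)) {y : Y'} (hSa : S' a y) : S' b y := by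
  have key : ∀ s : Finset (Fin n), S' (s.piecewise b a) y := by
    intro s
    induction s using Finset.induction_on with
    | empty => simpa using hSa
    | @insert j s hj ih =>
      rw [Finset.piecewise_insert]
      have h1 : S' (Function.update (s.piecewise b a) j (a j)) y := by
        have hje : (s.piecewise b a) j = a j := Finset.piecewise_eq_of_notMem _ _ _ hj
        rw [← hje, Function.update_eq_self]; exact ih
      exact stableX_up (hS'.2 (s.piecewise b a) j y) h1 (hab j)
  have := key Finset.univ
  rwa [Finset.piecewise_univ] at this

lemma Tupdate (hT' : TSectionsStable R' T') {a b : Fin m → Y'}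
    (hab : ∀ i, le2 R' (a i) (b i)) {x : X'} (hTa : T' x a) : T' x b := by
  have key : ∀ s : Finset (Fin m), T' x (s.piecewise b a) := by
    intro s
    induction s using Finset.induction_on with
    | empty => simpa using hTa
    | @insert j s hj ih =>
      rw [Finset.piecewise_insert]
      have h1 : T' x (Function.update (s.piecewise b a) j (a j)) := by
        have hje : (s.piecewise b a) j = a j := Finset.piecewise_eq_of_notMem _ _ _ hj
        rw [← hje, Function.update_eq_self]; exact ih
      exact stableY_up (hT'.2 x (s.piecewise b a) j) h1 (hab j)
  have := key Finset.univ
  rwa [Finset.piecewise_univ] at this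

lemma keyBS (h : IsBddMorphism R S T R' S' T' α β) (hS' : SSectionsStable R' S')
    (xs' : Fin n → X') (y : Y) :
    S' xs' (β y) ↔
      ∀ xs : Fin n → X, (∀ i, le1 R' (xs' i) (α (xs i))) → S' (fun i => α (xs i)) (β y) := by
  constructor
  · intro hSy xs hle; exact Supdate hS' hle hSy
  · intro H; exact h.forthS (fun xs hle => h.backS (H xs hle))

lemma keyAT (h : IsBddMorphism R S T R' S' T' α β) (hT' : TSectionsStable R' T')
    (x : X) (ys' : Fin m → Y') :
    T' (α x) ys' ↔
      ∀ ys : Fin m → Y, (∀ i, le2 R' (ys' i) (β (ys i))) → T' (α x) (fun i => β (ys i)) := by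
  constructor
  · intro hTy ys hle; exact Tupdate hT' hle hTy
  · intro H; exact h.forthT (fun ys hle => h.backT (H ys hle))

lemma restrict_stableY (h : IsBddMorphism R S T R' S' T' α β) {B' : Set Y'}
    (hB' : StableY R' B') :
    StableY (imR R' α β) {y : ↥(Set.range β) | y.val ∈ B'} := by
  refine Set.Subset.antisymm (subset_rpolar_lpolar _ _) ?_
  rintro ⟨y', y0, rfl⟩ hy
  have key : β y0 ∈ rpolar R' (lpolar R' B') := by
    intro x' hx'
    rw [keyB h]
    intro x hle
    have hαx : α x ∈ lpolar R' B' := lpolar_up hx' hle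
    have hmem : (⟨α x, ⟨x, rfl⟩⟩ : ↥(Set.range α)) ∈
        lpolar (imR R' α β) {y : ↥(Set.range β) | y.val ∈ B'} :=
      fun y hyB => hαx y.val hyB
    exact hy _ hmem
  show β y0 ∈ B'
  rwa [hB']

lemma restrict_stableX (h : IsBddMorphism R S T R' S' T' α β) {A' : Set X'}
    (hA' : StableX R' A') :
    StableX (imR R' α β) {x : ↥(Set.range α) | x.val ∈ A'} := by
  refine Set.Subset.antisymm (subset_lpolar_rpolar _ _) ?_
  rintro ⟨x', x0, rfl⟩ hx
  have key : α x0 ∈ lpolar R' (rpolar R' A') := by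
    intro y' hy'
    rw [keyA h]
    intro y hle
    have hβy : β y ∈ rpolar R' A' := rpolar_up hy' hle
    have hmem : (⟨β y, ⟨y, rfl⟩⟩ : ↥(Set.range β)) ∈
        rpolar (imR R' α β) {x : ↥(Set.range α) | x.val ∈ A'} :=
      fun x hxA => hβy x.val hxA
    exact hx _ hmem
  show α x0 ∈ A'
  rwa [hA']

end Aux

/-- The image `im(α, β)` of a bounded morphism of Ω-polarities: its quasi-orders are the
restrictions of those of the codomain, all its sections are stable (so it is an
Ω-polarity), and it is an inner substructure of the codomain (the inclusions form a
bounded morphism). -/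
theorem stmt12 {X Y X' Y' : Type*} {n m : ℕ}
    (R : X → Y → Prop) (S : (Fin n → X) → Y → Prop) (T : X → (Fin m → Y) → Prop)
    (hS : SSectionsStable R S) (hT : TSectionsStable R T)
    (R' : X' → Y' → Prop) (S' : (Fin n → X') → Y' → Prop) (T' : X' → (Fin m → Y') → Prop)
    (hS' : SSectionsStable R' S') (hT' : TSectionsStable R' T')
    (α : X → X') (β : Y → Y') (h : IsBddMorphism R S T R' S' T' α β) :
    -- (1) the quasi-orders of `im(α, β)` are the restrictions of `≤₁'` and `≤₂'`
    (∀ x z : ↥(Set.range α), le1 (imR R' α β) x z ↔ le1 R' x.val z.val) ∧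
    (∀ y w : ↥(Set.range β), le2 (imR R' α β) y w ↔ le2 R' y.val w.val) ∧
    -- (2) all sections of `S″` and `T″` are stable in `im(α, β)`
    SSectionsStable (imR R' α β) (imS S' α β) ∧
    TSectionsStable (imR R' α β) (imT T' α β) ∧
    -- (3) the inclusion maps form a bounded morphism from `im(α, β)` to `P′`
    IsBddMorphism (imR R' α β) (imS S' α β) (imT T' α β) R' S' T'
      (Subtype.val : ↥(Set.range α) → X') (Subtype.val : ↥(Set.range β) → Y') := by
    classical
  have hfunα : ∀ (xs : Fin n → ↥(Set.range α)) (i : Fin n) (x' : ↥(Set.range α)),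
      (fun j => (Function.update xs i x' j).val)
        = Function.update (fun j => (xs j).val) i x'.val := by
    intro xs i x'; funext j
    exact Function.apply_update (fun _ x => x.val) xs i x' j
  have hfunβ : ∀ (ys : Fin m → ↥(Set.range β)) (i : Fin m) (y' : ↥(Set.range β)),
      (fun j => (Function.update ys i y' j).val)
        = Function.update (fun j => (ys j).val) i y'.val := by
    intro ys i y'; funext j
    exact Function.apply_update (fun _ y => y.val) ys i y' j
  have part1 : ∀ x z : ↥(Set.range α), le1 (imR R' α β) x z ↔ le1 R' x.val z.val := by
    rintro ⟨x', x0, rfl⟩ ⟨z', z0, rfl⟩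
    constructor
    · intro H
      rw [le1_iff]
      intro y' hxy'
      rw [keyA h]
      intro y hle
      have h1 : R' (α x0) (β y) := (le2_iff R' y' (β y)).1 hle _ hxy'
      exact (le1_iff (imR R' α β) _ _).1 H ⟨β y, ⟨y, rfl⟩⟩ h1
    · intro H
      rw [le1_iff]
      intro y hxy
      exact (le1_iff R' _ _).1 H y.val hxy
  have part2 : ∀ y w : ↥(Set.range β), le2 (imR R' α β) y w ↔ le2 R' y.val w.val := by
    rintro ⟨y', y0, rfl⟩ ⟨w', w0, rfl⟩
    constructor
    · intro H
      rw [le2_iff]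
      intro x' hxy'
      rw [keyB h]
      intro x hle
      have h1 : R' (α x) (β y0) := (le1_iff R' x' (α x)).1 hle _ hxy'
      exact (le2_iff (imR R' α β) _ _).1 H ⟨α x, ⟨x, rfl⟩⟩ h1
    · intro H
      rw [le2_iff]
      intro x hxy
      exact (le2_iff R' _ _).1 H x.val hxy
  have stableS : SSectionsStable (imR R' α β) (imS S' α β) := by
    constructor
    · intro xs
      exact restrict_stableY h (hS'.1 (fun i => (xs i).val))
    · intro xs i y
      have heq : {x' : ↥(Set.range α) | imS S' α β (Function.update xs i x') y}
          = {x' : ↥(Set.range α) |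
              x'.val ∈ {z | S' (Function.update (fun j => (xs j).val) i z) y.val}} := by
        ext x'
        simp only [Set.mem_setOf_eq, imS, hfunα xs i x']
      rw [heq]
      exact restrict_stableX h (hS'.2 (fun j => (xs j).val) i y.val)
  have stableT : TSectionsStable (imR R' α β) (imT T' α β) := by
    constructor
    · intro ys
      exact restrict_stableX h (hT'.1 (fun i => (ys i).val))
    · intro x ys i
      have heq : {y' : ↥(Set.range β) | imT T' α β x (Function.update ys i y')}
          = {y' : ↥(Set.range β) |
              y'.val ∈ {z | T' x.val (Function.update (fun j => (ys j).val) i z)}} := by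
        ext y'
        simp only [Set.mem_setOf_eq, imT, hfunβ ys i y']
      rw [heq]
      exact restrict_stableY h (hT'.2 x.val (fun j => (ys j).val) i)
  refine ⟨part1, part2, stableS, stableT, ?_⟩
  refine ⟨?_, ?_, ?_, ?_, ?_, ?_, ?_, ?_, ?_⟩
  · intro x z hxz; exact (part1 x z).1 hxz
  · intro y w hyw; exact (part2 y w).1 hyw
  · intro x y hR; exact hR
  · rintro x' ⟨y', y0, rfl⟩ H
    show R' x' (β y0)
    rw [keyB h]
    intro x hle
    exact H ⟨α x, ⟨x, rfl⟩⟩ hle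
  · rintro ⟨x', x0, rfl⟩ y' H
    show R' (α x0) y'
    rw [keyA h]
    intro y hle
    exact H ⟨β y, ⟨y, rfl⟩⟩ hle
  · intro xs y hSv; exact hSv
  · rintro xs' ⟨y', y0, rfl⟩ H
    show S' xs' (β y0)
    rw [keyBS h hS']
    intro xs hle
    exact H (fun i => ⟨α (xs i), ⟨xs i, rfl⟩⟩) hle
  · intro x ys hTv; exact hTv
  · rintro ⟨x', x0, rfl⟩ ys' H
    show T' (α x0) ys'
    rw [keyAT h hT']
    intro ys hle
    exact H (fun i => ⟨β (ys i), ⟨ys i, rfl⟩⟩) hle
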